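/- Let q ≥ 2, n ≥ 1, P ≥ 1 and N = q^n. Draw offsets d_1, …, d_P independently and uniformly at random from (ZMod q)^n, and for each k ∈ (ZMod q)^n define the signature vector s_k ∈ ℂ^P by s_k[p] = ω^{⟨d_p, k⟩}. Let μ = max_{k ≠ m} (1/P)·|s_kᴴ s_m| be the mutual coherence of the matrix whose columns are the s_k. Then for every μ₀ > 0, ℙ( μ ≥ μ₀ ) ≤ 4·N²·exp( −μ₀²·P / 8 ). -/

import Mathlib

section McHelpers

lemma mc_pow_mod_eq (q : ℕ) (ω : ℂ) (hω1 : ω ^ q = 1) (m : ℕ) : ω ^ (m % q) = ω ^ m := by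
  conv_rhs => rw [← Nat.mod_add_div m q, pow_add, pow_mul, hω1, one_pow, mul_one]

lemma mc_pow_val_add (q : ℕ) [NeZero q] (ω : ℂ) (hω1 : ω ^ q = 1) (a b : ZMod q) :
    ω ^ (a + b).val = ω ^ a.val * ω ^ b.val := by
  rw [ZMod.val_add, mc_pow_mod_eq q ω hω1, pow_add]

lemma mc_secant (t y : ℝ) (hy : |y| ≤ 1) :
    Real.exp (t * y) ≤ Real.cosh t + y * Real.sinh t := by
  obtain ⟨hy1, hy2⟩ := abs_le.mp hy
  have h := convexOn_exp.2 (Set.mem_univ t) (Set.mem_univ (-t))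
    (show (0:ℝ) ≤ (1+y)/2 by linarith) (show (0:ℝ) ≤ (1-y)/2 by linarith)
    (show (1+y)/2 + (1-y)/2 = 1 by ring)
  simp only [smul_eq_mul] at h
  have e1 : (1+y)/2 * t + (1-y)/2 * (-t) = t * y := by ring
  rw [e1] at h
  calc Real.exp (t * y) ≤ (1+y)/2 * Real.exp t + (1-y)/2 * Real.exp (-t) := h
    _ = Real.cosh t + y * Real.sinh t := by
        rw [Real.cosh_eq, Real.sinh_eq]; ring

lemma mc_mgf_bound {α : Type*} [Fintype α] (f : α → ℝ) (hf : ∀ x, |f x| ≤ 1)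
    (h0 : ∑ x, f x = 0) (t : ℝ) :
    ∑ x, Real.exp (t * f x) ≤ (Fintype.card α : ℝ) * Real.exp (t^2/2) := by
  calc ∑ x, Real.exp (t * f x) ≤ ∑ x, (Real.cosh t + f x * Real.sinh t) :=
        Finset.sum_le_sum fun x _ => mc_secant t (f x) (hf x)
    _ = (Fintype.card α : ℝ) * Real.cosh t := by
        rw [Finset.sum_add_distrib, ← Finset.sum_mul, h0, Finset.sum_const]
        simp
    _ ≤ (Fintype.card α : ℝ) * Real.exp (t^2/2) :=
        mul_le_mul_of_nonneg_left (Real.cosh_le_exp_half_sq t) (by positivity)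

lemma mc_sum_prod_pow {α : Type*} {R : Type*} [CommSemiring R] [Fintype α] (P : ℕ) (g : α → R) :
    ∑ d : Fin P → α, ∏ p, g (d p) = (∑ x, g x) ^ P := by
  classical
  rw [← Fintype.piFinset_univ, ← Finset.prod_univ_sum]
  simp [Finset.prod_const]

open scoped Classical in
lemma mc_chernoff_count {α : Type*} [Fintype α] (P : ℕ) (f : α → ℝ)
    (hf : ∀ x, |f x| ≤ 1) (h0 : ∑ x, f x = 0)
    (a t : ℝ) (ht : 0 ≤ t) :
    ((Finset.univ.filter fun d : Fin P → α => a ≤ ∑ p, f (d p)).card : ℝ)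
      ≤ (Fintype.card α : ℝ)^P * Real.exp ((P : ℝ) * t^2/2 - t * a) := by
  have hmgf := mc_mgf_bound f hf h0
  calc ((Finset.univ.filter fun d : Fin P → α => a ≤ ∑ p, f (d p)).card : ℝ)
      = ∑ d ∈ (Finset.univ.filter fun d : Fin P → α => a ≤ ∑ p, f (d p)), (1:ℝ) := by
        rw [Finset.sum_const]; simp
    _ ≤ ∑ d ∈ (Finset.univ.filter fun d : Fin P → α => a ≤ ∑ p, f (d p)),
          Real.exp (t * (∑ p, f (d p)) - t * a) := by
        apply Finset.sum_le_sum
        intro d hd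
        rw [Finset.mem_filter] at hd
        have : 0 ≤ t * (∑ p, f (d p)) - t * a := by
          have := mul_le_mul_of_nonneg_left hd.2 ht
          linarith
        exact Real.one_le_exp this
    _ ≤ ∑ d : Fin P → α, Real.exp (t * (∑ p, f (d p)) - t * a) := by
        apply Finset.sum_le_sum_of_subset_of_nonneg (Finset.filter_subset _ _)
        intro d _ _
        exact (Real.exp_pos _).le
    _ = Real.exp (-(t*a)) * ∑ d : Fin P → α, ∏ p, Real.exp (t * f (d p)) := by
        rw [Finset.mul_sum]
        apply Finset.sum_congr rfl
        intro d _
        rw [← Real.exp_sum, ← Real.exp_add, Finset.mul_sum]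
        ring_nf
    _ = Real.exp (-(t*a)) * (∑ x, Real.exp (t * f x)) ^ P := by
        rw [mc_sum_prod_pow P (fun x => Real.exp (t * f x))]
    _ ≤ Real.exp (-(t*a)) * ((Fintype.card α : ℝ) * Real.exp (t^2/2)) ^ P := by
        apply mul_le_mul_of_nonneg_left _ (Real.exp_pos _).le
        exact pow_le_pow_left₀ (Finset.sum_nonneg fun x _ => (Real.exp_pos _).le) (hmgf t) P
    _ = (Fintype.card α : ℝ)^P * Real.exp ((P : ℝ) * t^2/2 - t * a) := by
        rw [mul_pow, ← Real.exp_nat_mul, mul_left_comm, ← Real.exp_add]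
        congr 1
        ring_nf

lemma mc_char_sum_zero (q n : ℕ) [NeZero q] (ω : ℂ) (hprim : IsPrimitiveRoot ω q)
    (c : Fin n → ZMod q) (hc : c ≠ 0) :
    ∑ d : Fin n → ZMod q, ω ^ (∑ i, d i * c i).val = 0 := by
  have hω1 : ω ^ q = 1 := hprim.pow_eq_one
  obtain ⟨j, hj⟩ : ∃ j, c j ≠ 0 := by
    by_contra h; push_neg at h; exact hc (funext h)
  set δ : Fin n → ZMod q := Pi.single j 1 with hδ
  set S := ∑ d : Fin n → ZMod q, ω ^ (∑ i, d i * c i).val with hS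
  have h1 : ∀ d : Fin n → ZMod q, ∑ i, (d + δ) i * c i = (∑ i, d i * c i) + c j := by
    intro d
    simp only [Pi.add_apply, add_mul]
    rw [Finset.sum_add_distrib]
    congr 1
    rw [hδ, Finset.sum_eq_single j]
    · simp
    · intro b _ hb; simp [Pi.single_apply, hb]
    · simp
  have htrans : S = ω ^ (c j).val * S := by
    have h2 : ∑ d : Fin n → ZMod q, ω ^ (∑ i, (d + δ) i * c i).val = S :=
      Fintype.sum_equiv (Equiv.addRight δ) _ _ (fun d => rfl)
    calc S = ∑ d : Fin n → ZMod q, ω ^ (∑ i, (d + δ) i * c i).val := h2.symm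
      _ = ∑ d : Fin n → ZMod q, ω ^ (c j).val * ω ^ (∑ i, d i * c i).val := by
          apply Finset.sum_congr rfl
          intro d _
          rw [h1 d, add_comm (∑ i, d i * c i), mc_pow_val_add q ω hω1]
      _ = ω ^ (c j).val * S := by rw [← Finset.mul_sum]
  have hne : ω ^ (c j).val ≠ 1 := by
    apply hprim.pow_ne_one_of_pos_of_lt
    · exact fun h => hj ((ZMod.val_eq_zero _).mp h)
    · exact ZMod.val_lt _
  have hmz : (ω ^ (c j).val - 1) * S = 0 := by
    rw [sub_mul, one_mul, ← htrans, sub_self]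
  rcases mul_eq_zero.mp hmz with h | h
  · exact absurd (sub_eq_zero.mp h) hne
  · exact h

lemma mc_conj_term (q : ℕ) [NeZero q] (ω : ℂ) (hω1 : ω ^ q = 1)
    (habsω : ‖ω‖ = 1) (A B : ZMod q) :
    (starRingEnd ℂ) (ω ^ A.val) * ω ^ B.val = ω ^ (B - A).val := by
  have hA : ‖ω ^ A.val‖ = 1 := by rw [norm_pow, habsω, one_pow]
  have hne : (ω : ℂ) ^ A.val ≠ 0 := by
    intro h; rw [h] at hA; simp at hA
  have hconj : (starRingEnd ℂ) (ω ^ A.val) = (ω ^ A.val)⁻¹ := by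
    rw [← Complex.inv_eq_conj]
    exact hA
  rw [hconj, inv_mul_eq_div, div_eq_iff hne, ← mc_pow_val_add q ω hω1, sub_add_cancel]

end McHelpers

set_option maxHeartbeats 2000000 in
open scoped Classical in
/-- mutual coherence bound: draw `d_1, …, d_P` i.i.d. uniform on
`(ZMod q)^n` and set `s_k[p] = ω^⟨d_p, k⟩`. With
`μ = max_{k ≠ m} (1/P)·|s_kᴴ s_m|` the mutual coherence, for every `μ₀ > 0`,
`ℙ(μ ≥ μ₀) ≤ 4·N²·exp(−μ₀²·P/8)` where `N = q^n`. The event `μ ≥ μ₀` is expressed as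
the existence of a pair `k ≠ m` with `(1/P)·|s_kᴴ s_m| ≥ μ₀`. -/
theorem mutual_coherence_tail
    (q n P : ℕ) [NeZero q] (hq : 2 ≤ q) (hn : 1 ≤ n) (hP : 1 ≤ P)
    (ω : ℂ) (hω : ω = Complex.exp (2 * (Real.pi : ℂ) * Complex.I / (q : ℂ)))
    (μ₀ : ℝ) (hμ₀ : 0 < μ₀) :
    ((Finset.univ.filter (fun d : Fin P → Fin n → ZMod q =>
        ∃ k m : Fin n → ZMod q, k ≠ m ∧
          (P : ℝ) * μ₀ ≤ ‖∑ p,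
            (starRingEnd ℂ) (ω ^ (∑ i, d p i * k i).val) *
              ω ^ (∑ i, d p i * m i).val‖)).card : ℝ) /
      (Fintype.card (Fin P → Fin n → ZMod q) : ℝ)
      ≤ 4 * ((q : ℝ) ^ n) ^ 2 * Real.exp (-(μ₀ ^ 2) * P / 8) := by
  classical
  have hq0 : q ≠ 0 := NeZero.ne q
  have hprim : IsPrimitiveRoot ω q := by
    rw [hω]; exact Complex.isPrimitiveRoot_exp q hq0
  have hω1 : ω ^ q = 1 := hprim.pow_eq_one
  have habsω : ‖ω‖ = 1 := by
    rw [hω, Complex.norm_exp]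
    have : (2 * (Real.pi : ℂ) * Complex.I / (q : ℂ)).re = 0 := by
      simp [Complex.div_re]
    rw [this, Real.exp_zero]
  have habs : ∀ m : ℕ, ‖ω ^ m‖ = 1 := fun m => by
    rw [norm_pow, habsω, one_pow]
  -- notation
  set A := (Fin n → ZMod q)
  have hcardA : (Fintype.card A : ℝ) = (q:ℝ)^n := by
    simp [A, ZMod.card]
  have hN1 : (1:ℝ) ≤ (q:ℝ)^n := one_le_pow₀ (by exact_mod_cast Nat.one_le_of_lt hq)
  have hPpos : (0:ℝ) < P := by exact_mod_cast hP
  set a : ℝ := (P:ℝ) * μ₀ / Real.sqrt 2 with ha_def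
  have hs2 : (0:ℝ) < Real.sqrt 2 := Real.sqrt_pos.mpr (by norm_num)
  have ha_pos : 0 < a := by positivity
  set t : ℝ := a / P with ht_def
  have ht : 0 ≤ t := by positivity
  have ha2 : a^2 * 2 = ((P:ℝ) * μ₀)^2 := by
    rw [ha_def, div_pow, Real.sq_sqrt (by norm_num : (0:ℝ) ≤ 2)]
    field_simp
  -- exponent computation
  have hexp : (P:ℝ) * t^2/2 - t * a ≤ -(μ₀^2) * P / 8 := by
    have h1 : (P:ℝ) * t^2/2 - t * a = -(a^2) / (2*P) := by
      rw [ht_def]; field_simp; ring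
    rw [h1]
    have h2 : -(a^2) / (2*(P:ℝ)) = -(μ₀^2) * P / 4 := by
      have : a^2 = (P:ℝ)^2 * μ₀^2 / 2 := by nlinarith [ha2]
      rw [this]; field_simp; ring
    rw [h2]
    have : 0 ≤ μ₀^2 * P := by positivity
    linarith
  set B : ℝ := ((q:ℝ)^n)^P * Real.exp (-(μ₀^2) * P / 8) with hB_def
  have hBpos : 0 < B := by positivity
  -- single-event Chernoff bound
  have event_bound : ∀ g : A → ℝ, (∀ x, |g x| ≤ 1) → (∑ x, g x = 0) →
      ((Finset.univ.filter fun d : Fin P → A => a ≤ ∑ p, g (d p)).card : ℝ) ≤ B := by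
    intro g hg hg0
    calc ((Finset.univ.filter fun d : Fin P → A => a ≤ ∑ p, g (d p)).card : ℝ)
        ≤ (Fintype.card A : ℝ)^P * Real.exp ((P : ℝ) * t^2/2 - t * a) :=
          mc_chernoff_count P g hg hg0 a t ht
      _ ≤ B := by
          rw [hcardA, hB_def]
          exact mul_le_mul_of_nonneg_left (Real.exp_le_exp.mpr hexp) (by positivity)
  -- per-c bound
  have perc : ∀ c : A, c ≠ 0 →
      ((Finset.univ.filter fun d : Fin P → A =>
        (P:ℝ) * μ₀ ≤ ‖∑ p, ω ^ (∑ i, d p i * c i).val‖).card : ℝ) ≤ 4 * B := by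
    intro c hc
    set g1 : A → ℝ := fun x => (ω ^ (∑ i, x i * c i).val).re with hg1
    set g3 : A → ℝ := fun x => (ω ^ (∑ i, x i * c i).val).im with hg3
    have hz : ∑ x : A, (ω ^ (∑ i, x i * c i).val) = 0 := mc_char_sum_zero q n ω hprim c hc
    have hb1 : ∀ x, |g1 x| ≤ 1 := fun x => by
      rw [hg1]; calc |(ω ^ (∑ i, x i * c i).val).re| ≤ ‖_‖ := Complex.abs_re_le_norm _
        _ = 1 := habs _
    have hb3 : ∀ x, |g3 x| ≤ 1 := fun x => by
      rw [hg3]; calc |(ω ^ (∑ i, x i * c i).val).im| ≤ ‖_‖ := Complex.abs_im_le_norm _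
        _ = 1 := habs _
    have hb2 : ∀ x, |(-g1) x| ≤ 1 := fun x => by rw [Pi.neg_apply, abs_neg]; exact hb1 x
    have hb4 : ∀ x, |(-g3) x| ≤ 1 := fun x => by rw [Pi.neg_apply, abs_neg]; exact hb3 x
    have hz1 : ∑ x, g1 x = 0 := by
      have := congrArg Complex.re hz
      rw [Complex.re_sum] at this
      simpa using this
    have hz3 : ∑ x, g3 x = 0 := by
      have := congrArg Complex.im hz
      rw [Complex.im_sum] at this
      simpa using this
    have hz2 : ∑ x, (-g1) x = 0 := by simp [Finset.sum_neg_distrib, hz1]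
    have hz4 : ∑ x, (-g3) x = 0 := by simp [Finset.sum_neg_distrib, hz3]
    -- subset of union of four events
    set G1 := Finset.univ.filter fun d : Fin P → A => a ≤ ∑ p, g1 (d p) with hG1
    set G2 := Finset.univ.filter fun d : Fin P → A => a ≤ ∑ p, (-g1) (d p) with hG2
    set G3 := Finset.univ.filter fun d : Fin P → A => a ≤ ∑ p, g3 (d p) with hG3
    set G4 := Finset.univ.filter fun d : Fin P → A => a ≤ ∑ p, (-g3) (d p) with hG4
    have hsub : (Finset.univ.filter fun d : Fin P → A =>
        (P:ℝ) * μ₀ ≤ ‖∑ p, ω ^ (∑ i, d p i * c i).val‖) ⊆ G1 ∪ G2 ∪ G3 ∪ G4 := by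
      intro d hd
      rw [Finset.mem_filter] at hd
      have hd2 := hd.2
      set S := ∑ p, ω ^ (∑ i, d p i * c i).val with hS
      have hre : ∑ p, g1 (d p) = S.re := by rw [hS, Complex.re_sum]
      have him : ∑ p, g3 (d p) = S.im := by rw [hS, Complex.im_sum]
      simp only [Finset.mem_union, hG1, hG2, hG3, hG4, Finset.mem_filter, Finset.mem_univ,
        true_and, Pi.neg_apply, Finset.sum_neg_distrib, hre, him]
      by_contra hcon
      push_neg at hcon
      obtain ⟨⟨⟨c1, c2⟩, c3⟩, c4⟩ := hcon
      have habs2 : ((P:ℝ) * μ₀)^2 ≤ ‖S‖^2 :=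
        pow_le_pow_left₀ (by positivity) hd2 2
      have hsq : ‖S‖^2 = S.re^2 + S.im^2 := by
        rw [Complex.sq_norm, Complex.normSq_apply]; ring
      nlinarith [mul_pos (sub_pos.mpr c1) (sub_pos.mpr (by linarith : -a < S.re)),
        mul_pos (sub_pos.mpr c3) (sub_pos.mpr (by linarith : -a < S.im))]
    calc ((Finset.univ.filter fun d : Fin P → A =>
          (P:ℝ) * μ₀ ≤ ‖∑ p, ω ^ (∑ i, d p i * c i).val‖).card : ℝ)
        ≤ ((G1 ∪ G2 ∪ G3 ∪ G4).card : ℝ) := by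
          exact_mod_cast Finset.card_le_card hsub
      _ ≤ ((G1.card + G2.card + G3.card + G4.card : ℕ) : ℝ) := by
          exact_mod_cast (Finset.card_union_le _ _).trans (by
            have := Finset.card_union_le (G1 ∪ G2) G3
            have := Finset.card_union_le G1 G2
            omega)
      _ ≤ B + B + B + B := by
          push_cast
          have e1 := event_bound g1 hb1 hz1
          have e2 := event_bound (-g1) hb2 hz2
          have e3 := event_bound g3 hb3 hz3
          have e4 := event_bound (-g3) hb4 hz4
          rw [← hG1] at e1; rw [← hG2] at e2; rw [← hG3] at e3; rw [← hG4] at e4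
          linarith
      _ = 4 * B := by ring
  -- union bound over c
  set F := Finset.univ.filter (fun d : Fin P → A =>
      ∃ k m : A, k ≠ m ∧
        (P : ℝ) * μ₀ ≤ ‖∑ p,
          (starRingEnd ℂ) (ω ^ (∑ i, d p i * k i).val) *
            ω ^ (∑ i, d p i * m i).val‖) with hF
  set Cs := Finset.univ.filter (fun c : A => c ≠ 0) with hCs
  set E : A → Finset (Fin P → A) := fun c => Finset.univ.filter fun d : Fin P → A =>
      (P:ℝ) * μ₀ ≤ ‖∑ p, ω ^ (∑ i, d p i * c i).val‖ with hE
  have hFsub : F ⊆ Cs.biUnion E := by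
    intro d hd
    rw [hF, Finset.mem_filter] at hd
    obtain ⟨-, k, m, hkm, hle⟩ := hd
    have hc : m - k ≠ 0 := sub_ne_zero_of_ne (Ne.symm hkm)
    apply Finset.mem_biUnion.mpr
    refine ⟨m - k, by rw [hCs]; simp [hc], ?_⟩
    rw [hE, Finset.mem_filter]
    refine ⟨Finset.mem_univ _, ?_⟩
    have hterm : ∀ p, (starRingEnd ℂ) (ω ^ (∑ i, d p i * k i).val) *
        ω ^ (∑ i, d p i * m i).val = ω ^ (∑ i, d p i * (m - k) i).val := by
      intro p
      rw [mc_conj_term q ω hω1 habsω]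
      congr 2
      rw [← Finset.sum_sub_distrib]
      apply Finset.sum_congr rfl
      intro i _
      rw [Pi.sub_apply, mul_sub]
    rw [← Finset.sum_congr rfl (fun p _ => hterm p)]
    exact hle
  have hcount : (F.card : ℝ) ≤ (q:ℝ)^n * (4 * B) := by
    calc (F.card : ℝ) ≤ ((Cs.biUnion E).card : ℝ) := by
          exact_mod_cast Finset.card_le_card hFsub
      _ ≤ ∑ c ∈ Cs, ((E c).card : ℝ) := by
          exact_mod_cast Finset.card_biUnion_le
      _ ≤ ∑ c ∈ Cs, 4 * B := by
          apply Finset.sum_le_sum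
          intro c hcmem
          rw [hCs, Finset.mem_filter] at hcmem
          exact perc c hcmem.2
      _ = (Cs.card : ℝ) * (4 * B) := by rw [Finset.sum_const]; simp
      _ ≤ (q:ℝ)^n * (4 * B) := by
          apply mul_le_mul_of_nonneg_right _ (by positivity)
          rw [← hcardA]
          exact_mod_cast Finset.card_le_card (Finset.filter_subset _ _) |>.trans
            (le_of_eq (Finset.card_univ))
  -- conclude
  have hcardΩ : (Fintype.card (Fin P → A) : ℝ) = ((q:ℝ)^n)^P := by
    rw [Fintype.card_fun]
    push_cast [hcardA]
    simp [A, ZMod.card]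
  have hΩpos : (0:ℝ) < (Fintype.card (Fin P → A) : ℝ) := by
    rw [hcardΩ]; positivity
  rw [div_le_iff₀ hΩpos]
  calc (F.card : ℝ) ≤ (q:ℝ)^n * (4 * B) := hcount
    _ ≤ 4 * ((q : ℝ) ^ n) ^ 2 * Real.exp (-(μ₀ ^ 2) * P / 8) * (Fintype.card (Fin P → A) : ℝ) := by
        rw [hcardΩ, hB_def]
        have hE8 : (0:ℝ) < Real.exp (-(μ₀^2) * P / 8) := Real.exp_pos _
        have hqP : (0:ℝ) < ((q:ℝ)^n)^P := by positivity
        nlinarith [mul_pos hqP hE8, mul_le_mul_of_nonneg_right hN1 (le_of_lt (mul_pos hqP hE8))]
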